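/- Let f be a meromorphic function in the Yosida class N₁. Then there exists R₀ < ∞ such that every disc B(w, R₀), w ∈ ℂ, contains at least one zero of f and at least one pole of f. -/

import Mathlib

open Complex Metric OnePoint Filter

/-- Finite part of a point of the Riemann sphere. -/
noncomputable def finPart (x : OnePoint ℂ) : ℂ := Option.elim x 0 id

/-- Inversion `z ↦ 1/z` on the Riemann sphere. -/
noncomputable def oinv (x : OnePoint ℂ) : OnePoint ℂ :=
  Option.elim x (((0 : ℂ) : OnePoint ℂ))
    (fun z => if z = 0 then (∞ : OnePoint ℂ) else (((z⁻¹ : ℂ)) : OnePoint ℂ))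

/-- The spherical (chordal) metric on the Riemann sphere. -/
noncomputable def sphDist (x y : OnePoint ℂ) : ℝ :=
  Option.elim x
    (Option.elim y 0 (fun w => 2 / Real.sqrt (1 + ‖w‖ ^ 2)))
    (fun z => Option.elim y (2 / Real.sqrt (1 + ‖z‖ ^ 2))
      (fun w => 2 * dist z w / (Real.sqrt (1 + ‖z‖ ^ 2) * Real.sqrt (1 + ‖w‖ ^ 2))))

/-- A map to the Riemann sphere is meromorphic: at every point either the map is finite
and analytic, or it takes the value `∞` and its reciprocal is analytic there. -/
def MeroSphere (f : ℂ → OnePoint ℂ) : Prop :=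
  ∀ z : ℂ, (f z ≠ ∞ ∧ AnalyticAt ℂ (fun w => finPart (f w)) z)
    ∨ (f z = ∞ ∧ AnalyticAt ℂ (fun w => finPart (oinv (f w))) z)

/-- The translates `f (· + h n)` converge to `g` uniformly on compacta in the spherical
metric. -/
def UnifCompLim (f : ℂ → OnePoint ℂ) (h : ℕ → ℂ) (g : ℂ → OnePoint ℂ) : Prop :=
  ∀ K : Set ℂ, IsCompact K → ∀ ε > (0 : ℝ), ∃ N : ℕ, ∀ n ≥ N, ∀ z ∈ K,
    sphDist (f (z + h n)) (g z) < ε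

/-- Yosida's class `N₁`: a meromorphic map to the Riemann sphere whose family of translates
is normal (uniformly on compacta, spherical metric) and has no constant limit function. -/
def YosidaN1 (f : ℂ → OnePoint ℂ) : Prop :=
  MeroSphere f ∧
  (∀ h : ℕ → ℂ, ∃ φ : ℕ → ℕ, StrictMono φ ∧ ∃ g : ℂ → OnePoint ℂ, UnifCompLim f (h ∘ φ) g) ∧
  (∀ h : ℕ → ℂ, ∀ g : ℂ → OnePoint ℂ, UnifCompLim f h g → ¬ ∃ c : OnePoint ℂ, g = fun _ => c)

open Classical in
/-- Multiplicity of a zero or pole of a meromorphic map to the sphere. -/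
noncomputable def multAt (f : ℂ → OnePoint ℂ) (z : ℂ) : ℕ∞ :=
  if f z = (∞ : OnePoint ℂ) then
    (if h : AnalyticAt ℂ (fun w => finPart (oinv (f w))) z then analyticOrderAt (fun w => finPart (oinv (f w))) z else 0)
  else
    (if h : AnalyticAt ℂ (fun w => finPart (f w)) z then analyticOrderAt (fun w => finPart (f w)) z else 0)

namespace YosidaAux

noncomputable def q (z : ℂ) : ℝ := Real.sqrt (1 + ‖z‖ ^ 2)

lemma q_pos (z : ℂ) : 0 < q z := Real.sqrt_pos.mpr (by positivity)

lemma q_sq (z : ℂ) : q z ^ 2 = 1 + ‖z‖ ^ 2 := Real.sq_sqrt (by positivity)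

lemma one_le_q (z : ℂ) : 1 ≤ q z := by
  have h := Real.sqrt_le_sqrt (show (1:ℝ) ≤ 1 + ‖z‖^2 by nlinarith [sq_nonneg ‖z‖])
  rwa [Real.sqrt_one] at h

lemma q_le (z : ℂ) : q z ≤ 1 + ‖z‖ := by
  have h := Real.sqrt_le_sqrt (show 1 + ‖z‖^2 ≤ (1+‖z‖)^2 by nlinarith [norm_nonneg z])
  rwa [Real.sqrt_sq (by positivity)] at h

lemma norm_le_q (z : ℂ) : ‖z‖ ≤ q z := by
  have h := Real.sqrt_le_sqrt (show ‖z‖^2 ≤ 1 + ‖z‖^2 by nlinarith)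
  rwa [Real.sqrt_sq (norm_nonneg z)] at h

lemma sphDist_coe_coe (z w : ℂ) : sphDist ↑z ↑w = 2 * dist z w / (q z * q w) := rfl
lemma sphDist_coe_infty (z : ℂ) : sphDist ↑z ∞ = 2 / q z := rfl
lemma sphDist_infty_coe (z : ℂ) : sphDist ∞ ↑z = 2 / q z := rfl
lemma sphDist_infty_infty : sphDist ∞ ∞ = 0 := rfl

lemma sphDist_nonneg (x y : OnePoint ℂ) : 0 ≤ sphDist x y := by
  induction x using OnePoint.rec <;> induction y using OnePoint.rec <;>
    simp [sphDist_coe_coe, sphDist_coe_infty, sphDist_infty_coe, sphDist_infty_infty]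
  · exact le_of_lt (div_pos two_pos (q_pos _))
  · exact le_of_lt (div_pos two_pos (q_pos _))
  · exact div_nonneg (by positivity) (le_of_lt (mul_pos (q_pos _) (q_pos _)))

lemma sphDist_self (x : OnePoint ℂ) : sphDist x x = 0 := by
  induction x using OnePoint.rec <;>
    simp [sphDist_coe_coe, sphDist_infty_infty]

lemma sphDist_comm (x y : OnePoint ℂ) : sphDist x y = sphDist y x := by
  induction x using OnePoint.rec <;> induction y using OnePoint.rec <;>
    simp [sphDist_coe_coe, sphDist_coe_infty, sphDist_infty_coe, dist_comm, mul_comm]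

lemma eq_of_sphDist_eq_zero {x y : OnePoint ℂ} (h : sphDist x y ≤ 0) : x = y := by
  induction x using OnePoint.rec <;> induction y using OnePoint.rec
  · rfl
  · next w =>
    exfalso; exact absurd h (not_le.mpr (div_pos two_pos (q_pos w)))
  · next z =>
    exfalso; exact absurd h (not_le.mpr (div_pos two_pos (q_pos z)))
  · next z w =>
    rw [sphDist_coe_coe] at h
    have hq := mul_pos (q_pos z) (q_pos w)
    have : dist z w ≤ 0 := by
      by_contra hc
      push_neg at hc
      have : 0 < 2 * dist z w / (q z * q w) := by positivity
      linarith
    have : z = w := by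
      have := dist_nonneg (x := z) (y := w)
      have : dist z w = 0 := le_antisymm ‹dist z w ≤ 0› this
      exact dist_eq_zero.mp this
    simp [this]



lemma norm_one_add_conj_mul_le (a b : ℂ) : ‖1 + (starRingEnd ℂ) a * b‖ ≤ q a * q b := by
  have h1 : ‖1 + (starRingEnd ℂ) a * b‖ ≤ 1 + ‖a‖ * ‖b‖ := by
    calc ‖1 + (starRingEnd ℂ) a * b‖ ≤ ‖(1:ℂ)‖ + ‖(starRingEnd ℂ) a * b‖ := norm_add_le _ _
    _ = 1 + ‖a‖ * ‖b‖ := by rw [norm_one, norm_mul, RCLike.norm_conj]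
  have h2 : (1 + ‖a‖ * ‖b‖)^2 ≤ (q a * q b)^2 := by
    rw [mul_pow, q_sq, q_sq]
    nlinarith [sq_nonneg (‖a‖ - ‖b‖), norm_nonneg a, norm_nonneg b]
  nlinarith [norm_nonneg ((1:ℂ) + (starRingEnd ℂ) a * b), mul_pos (q_pos a) (q_pos b),
    norm_nonneg a, norm_nonneg b, mul_nonneg (norm_nonneg a) (norm_nonneg b)]

lemma chordal_key (z u w : ℂ) : dist z w * q u ≤ dist z u * q w + dist u w * q z := by
  have hid : (z - w) * (1 + (starRingEnd ℂ) u * u)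
      = (z - u) * (1 + (starRingEnd ℂ) u * w) + (u - w) * (1 + (starRingEnd ℂ) u * z) := by
    ring
  have e1 : ‖(z - w) * (1 + (starRingEnd ℂ) u * u)‖ = ‖z - w‖ * (q u)^2 := by
    rw [norm_mul, q_sq]
    congr 1
    have h : (1 : ℂ) + (starRingEnd ℂ) u * u = ((1 + ‖u‖^2 : ℝ) : ℂ) := by
      rw [mul_comm, Complex.mul_conj, Complex.sq_norm]; push_cast; ring
    rw [h, Complex.norm_real, Real.norm_of_nonneg (by positivity)]
  have e2 : ‖(z - u) * (1 + (starRingEnd ℂ) u * w) + (u - w) * (1 + (starRingEnd ℂ) u * z)‖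
      ≤ ‖z - u‖ * (q u * q w) + ‖u - w‖ * (q u * q z) := by
    calc _ ≤ ‖(z - u) * (1 + (starRingEnd ℂ) u * w)‖ + ‖(u - w) * (1 + (starRingEnd ℂ) u * z)‖ :=
          norm_add_le _ _
    _ ≤ ‖z - u‖ * (q u * q w) + ‖u - w‖ * (q u * q z) := by
        rw [norm_mul, norm_mul]
        gcongr
        · exact norm_one_add_conj_mul_le u w
        · exact norm_one_add_conj_mul_le u z
  have key : ‖z - w‖ * (q u)^2 ≤ ‖z - u‖ * (q u * q w) + ‖u - w‖ * (q u * q z) := by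
    rw [← e1, hid]; exact e2
  have hq := q_pos u
  rw [dist_eq_norm, dist_eq_norm, dist_eq_norm]
  nlinarith [key]

lemma q_le_add (b c : ℂ) : q b ≤ q c + dist b c := by
  have h1 : ‖b‖ ≤ ‖c‖ + dist b c := by
    rw [dist_eq_norm]
    have := norm_sub_norm_le b c
    linarith
  have h2 : 1 + ‖b‖^2 ≤ (q c + dist b c)^2 := by
    have hd : (0:ℝ) ≤ dist b c := dist_nonneg
    nlinarith [q_sq c, norm_le_q c, norm_nonneg b, norm_nonneg c]
  have h3 := Real.sqrt_le_sqrt h2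
  rw [Real.sqrt_sq (by nlinarith [q_pos c, dist_nonneg (x := b) (y := c)])] at h3
  exact h3

lemma sphDist_triangle (x y z : OnePoint ℂ) : sphDist x z ≤ sphDist x y + sphDist y z := by
  induction x using OnePoint.rec <;> induction y using OnePoint.rec <;>
    induction z using OnePoint.rec
  · simp [sphDist_infty_infty]
  · next c =>
    simp [sphDist_infty_infty, sphDist_infty_coe]
  · next b =>
    have := div_pos two_pos (q_pos b)
    simp [sphDist_infty_infty, sphDist_infty_coe, sphDist_coe_infty]
    positivity
  · next b c =>
    rw [sphDist_infty_coe, sphDist_infty_coe, sphDist_coe_coe]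
    have hb := q_pos b; have hc := q_pos c
    rw [div_add_div _ _ hb.ne' (mul_pos hb hc).ne', div_le_div_iff₀ hc (by exact mul_pos hb (mul_pos hb hc))]
    have key := q_le_add b c
    nlinarith [mul_le_mul_of_nonneg_left key (by positivity : (0:ℝ) ≤ 2 * q b * q c), dist_nonneg (x := b) (y := c)]
  · next a =>
    simp [sphDist_coe_infty, sphDist_infty_infty]
  · next a c =>
    rw [sphDist_coe_coe, sphDist_coe_infty, sphDist_infty_coe]
    have ha := q_pos a; have hc := q_pos c
    rw [div_add_div _ _ ha.ne' hc.ne', div_le_div_iff₀ (mul_pos ha hc) (mul_pos ha hc)]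
    have key : dist a c ≤ q a + q c := by
      rw [dist_eq_norm]
      have := norm_sub_le a c
      have := norm_le_q a; have := norm_le_q c
      linarith
    nlinarith [mul_le_mul_of_nonneg_left key (by positivity : (0:ℝ) ≤ 2 * q a * q c)]
  · next a b =>
    rw [sphDist_coe_infty, sphDist_coe_coe, sphDist_coe_infty]
    have ha := q_pos a; have hb := q_pos b
    rw [div_add_div _ _ (mul_pos ha hb).ne' hb.ne', div_le_div_iff₀ ha (by exact mul_pos (mul_pos ha hb) hb)]
    have key := q_le_add b a
    rw [dist_comm b a] at key
    nlinarith [mul_le_mul_of_nonneg_left key (by positivity : (0:ℝ) ≤ 2 * q a * q b), dist_nonneg (x := a) (y := b)]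
  · next a b c =>
    rw [sphDist_coe_coe, sphDist_coe_coe, sphDist_coe_coe]
    have ha := q_pos a; have hb := q_pos b; have hc := q_pos c
    rw [div_add_div _ _ (mul_pos ha hb).ne' (mul_pos hb hc).ne',
      div_le_div_iff₀ (mul_pos ha hc) (by exact mul_pos (mul_pos ha hb) (mul_pos hb hc))]
    have key := chordal_key a b c
    nlinarith [mul_le_mul_of_nonneg_left key (by positivity : (0:ℝ) ≤ 2 * q a * q b * q c),
      dist_nonneg (x := a) (y := b), dist_nonneg (x := b) (y := c), dist_nonneg (x := a) (y := c)]

lemma q_zero : q 0 = 1 := by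
  rw [q]; simp

lemma oinv_infty : oinv ∞ = ((0:ℂ) : OnePoint ℂ) := rfl
lemma oinv_coe (z : ℂ) : oinv ↑z = if z = 0 then (∞ : OnePoint ℂ) else ((z⁻¹ : ℂ) : OnePoint ℂ) := rfl
lemma finPart_coe (z : ℂ) : finPart ↑z = z := rfl
lemma finPart_infty : finPart ∞ = 0 := rfl

lemma oinv_coe_zero : oinv ((0:ℂ) : OnePoint ℂ) = ∞ := by rw [oinv_coe]; simp
lemma oinv_coe_ne (z : ℂ) (hz : z ≠ 0) : oinv ↑z = ((z⁻¹ : ℂ) : OnePoint ℂ) := by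
  rw [oinv_coe, if_neg hz]

lemma oinv_oinv (x : OnePoint ℂ) : oinv (oinv x) = x := by
  induction x using OnePoint.rec
  · rw [oinv_infty, oinv_coe_zero]
  · next z =>
    by_cases hz : z = 0
    · subst hz; rw [oinv_coe_zero, oinv_infty]
    · rw [oinv_coe_ne z hz, oinv_coe_ne _ (inv_ne_zero hz), inv_inv]

lemma coe_finPart {x : OnePoint ℂ} (hx : x ≠ ∞) : ↑(finPart x) = x := by
  induction x using OnePoint.rec
  · exact absurd rfl hx
  · rfl

lemma finPart_oinv (x : OnePoint ℂ) : finPart (oinv x) = (finPart x)⁻¹ := by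
  induction x using OnePoint.rec
  · rw [oinv_infty, finPart_infty, finPart_coe, inv_zero]
  · next z =>
    by_cases hz : z = 0
    · subst hz; rw [oinv_coe_zero, finPart_infty, finPart_coe, inv_zero]
    · rw [oinv_coe_ne z hz, finPart_coe, finPart_coe]

lemma oinv_eq_infty_iff {x : OnePoint ℂ} : oinv x = ∞ ↔ x = ((0:ℂ) : OnePoint ℂ) := by
  induction x using OnePoint.rec
  · rw [oinv_infty]
    simp [eq_comm]
  · next z =>
    by_cases hz : z = 0
    · subst hz; simp [oinv_coe_zero]
    · rw [oinv_coe_ne z hz]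
      constructor
      · intro h; exact absurd h (OnePoint.coe_ne_infty _)
      · intro h; exact absurd (OnePoint.coe_eq_coe.mp h) hz

lemma oinv_eq_zero_iff {x : OnePoint ℂ} : oinv x = ((0:ℂ) : OnePoint ℂ) ↔ x = ∞ := by
  constructor
  · intro h
    have := congrArg oinv h
    rwa [oinv_oinv, oinv_coe_zero] at this
  · intro h; subst h; exact oinv_infty


private lemma aux1 {a Q : ℝ} (ha : 0 < a) (hQ : 0 < Q) : 2 * a⁻¹ / (1 * (Q / a)) = 2 / Q := by
  field_simp
private lemma aux2 {a Q : ℝ} (ha : 0 < a) (hQ : 0 < Q) : 2 * a⁻¹ / (Q / a * 1) = 2 / Q := by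
  field_simp
private lemma aux3 {a Q : ℝ} (ha : 0 < a) (hQ : 0 < Q) : 2 / (Q / a) = 2 * a / (1 * Q) := by
  field_simp
private lemma aux4 {a Q : ℝ} (ha : 0 < a) (hQ : 0 < Q) : 2 / (Q / a) = 2 * a / (Q * 1) := by
  field_simp
private lemma aux5 {d a b P Q : ℝ} (ha : 0 < a) (hb : 0 < b) (hP : 0 < P) (hQ : 0 < Q) :
    2 * (d / (a * b)) / (P / a * (Q / b)) = 2 * d / (P * Q) := by
  field_simp

lemma q_inv (x : ℂ) (hx : x ≠ 0) : q x⁻¹ = q x / ‖x‖ := by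
  have hn : (0:ℝ) < ‖x‖ := norm_pos_iff.mpr hx
  rw [q, q, norm_inv]
  have hxx : 1 + ‖x‖⁻¹^2 = (1 + ‖x‖^2)/‖x‖^2 := by
    rw [eq_div_iff (pow_ne_zero 2 hn.ne'), add_mul, one_mul, inv_pow,
      inv_mul_cancel₀ (pow_ne_zero 2 hn.ne'), add_comm]
  rw [hxx]
  rw [Real.sqrt_div (by positivity), Real.sqrt_sq hn.le]

lemma sphDist_oinv (x y : OnePoint ℂ) : sphDist (oinv x) (oinv y) = sphDist x y := by
  induction x using OnePoint.rec <;> induction y using OnePoint.rec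
  · simp [oinv_infty, sphDist_coe_coe, sphDist_infty_infty]
  · next w =>
    by_cases hw : w = 0
    · subst hw
      rw [oinv_infty, oinv_coe_zero, sphDist_coe_infty, sphDist_infty_coe]
    · have hnw : (0:ℝ) < ‖w‖ := norm_pos_iff.mpr hw
      rw [oinv_infty, oinv_coe_ne w hw, sphDist_coe_coe, sphDist_infty_coe, q_inv w hw, q_zero]
      rw [dist_eq_norm, zero_sub, norm_neg, norm_inv]
      exact aux1 hnw (q_pos w)
  · next z =>
    by_cases hz : z = 0
    · subst hz
      rw [oinv_infty, oinv_coe_zero, sphDist_infty_coe, sphDist_coe_infty]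
    · have hnz : (0:ℝ) < ‖z‖ := norm_pos_iff.mpr hz
      rw [oinv_infty, oinv_coe_ne z hz, sphDist_coe_coe, sphDist_coe_infty, q_inv z hz, q_zero]
      rw [dist_eq_norm, sub_zero, norm_inv]
      exact aux2 hnz (q_pos z)
  · next z w =>
    by_cases hz : z = 0 <;> by_cases hw : w = 0
    · subst hz; subst hw
      rw [oinv_coe_zero, sphDist_infty_infty, sphDist_coe_coe]
      simp
    · subst hz
      have hnw : (0:ℝ) < ‖w‖ := norm_pos_iff.mpr hw
      rw [oinv_coe_zero, oinv_coe_ne w hw, sphDist_infty_coe, sphDist_coe_coe, q_inv w hw, q_zero]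
      rw [dist_eq_norm, zero_sub, norm_neg]
      exact aux3 hnw (q_pos w)
    · subst hw
      have hnz : (0:ℝ) < ‖z‖ := norm_pos_iff.mpr hz
      rw [oinv_coe_ne z hz, oinv_coe_zero, sphDist_coe_infty, sphDist_coe_coe, q_inv z hz, q_zero]
      rw [dist_eq_norm, sub_zero]
      exact aux4 hnz (q_pos z)
    · have hnz : (0:ℝ) < ‖z‖ := norm_pos_iff.mpr hz
      have hnw : (0:ℝ) < ‖w‖ := norm_pos_iff.mpr hw
      rw [oinv_coe_ne z hz, oinv_coe_ne w hw, sphDist_coe_coe, sphDist_coe_coe,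
        q_inv z hz, q_inv w hw]
      have hd : dist z⁻¹ w⁻¹ = dist z w / (‖z‖ * ‖w‖) := by
        rw [dist_eq_norm, dist_eq_norm, show z⁻¹ - w⁻¹ = (w - z)/(z*w) by field_simp,
          norm_div, norm_mul, norm_sub_rev]
      rw [hd]
      exact aux5 hnz hnw (q_pos z) (q_pos w)


/-! ### Comparison lemmas between spherical and euclidean distance -/

lemma sphDist_le_two_dist (a b : ℂ) : sphDist ↑a ↑b ≤ 2 * dist a b := by
  rw [sphDist_coe_coe]
  have h1 : 1 ≤ q a * q b := by nlinarith [one_le_q a, one_le_q b]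
  have h2 : (0:ℝ) ≤ 2 * dist a b := by positivity
  calc 2 * dist a b / (q a * q b) ≤ 2 * dist a b / 1 := by
        apply div_le_div_of_nonneg_left h2 one_pos h1  |>.trans_eq rfl
  _ = 2 * dist a b := by rw [div_one]
  
lemma dist_eq_sph (a b : ℂ) : dist a b = sphDist ↑a ↑b * (q a * q b) / 2 := by
  rw [sphDist_coe_coe]
  have := (mul_pos (q_pos a) (q_pos b)).ne'
  field_simp
  rw [mul_assoc, mul_div_assoc, div_self this, mul_one]

lemma norm_gt_of_sphDist_infty_lt {a : ℂ} {M : ℝ} (hM : 0 ≤ M)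
    (h : sphDist ↑a ∞ < 2 / Real.sqrt (1 + M^2)) : M < ‖a‖ := by
  rw [sphDist_coe_infty] at h
  have hs : (0:ℝ) < Real.sqrt (1 + M^2) := Real.sqrt_pos.mpr (by positivity)
  have h2 : Real.sqrt (1 + M^2) < q a := by
    rw [div_lt_div_iff₀ (q_pos a) hs] at h
    nlinarith [q_pos a]
  have h3 : 1 + M^2 < 1 + ‖a‖^2 := by
    have := q_sq a
    nlinarith [Real.sq_sqrt (show (0:ℝ) ≤ 1 + M^2 by positivity), Real.sqrt_nonneg (1 + M^2)]
  nlinarith [norm_nonneg a]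

lemma sphDist_infty_le_of_norm_ge {a : ℂ} {M : ℝ} (hM : 0 ≤ M) (h : M ≤ ‖a‖) :
    sphDist ↑a ∞ ≤ 2 / Real.sqrt (1 + M^2) := by
  rw [sphDist_coe_infty]
  have hs : (0:ℝ) < Real.sqrt (1 + M^2) := Real.sqrt_pos.mpr (by nlinarith [sq_nonneg M])
  apply div_le_div_of_nonneg_left (by norm_num) hs
  rw [q]
  exact Real.sqrt_le_sqrt (by nlinarith [norm_nonneg a])

lemma dist_le_sph_of_norm_le_one {a b : ℂ} (ha : ‖a‖ ≤ 1) (hb : ‖b‖ ≤ 1) :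
    dist a b ≤ sphDist ↑a ↑b := by
  rw [dist_eq_sph a b]
  have hqa : q a ≤ Real.sqrt 2 := by
    rw [q]; exact Real.sqrt_le_sqrt (by nlinarith [norm_nonneg a])
  have hqb : q b ≤ Real.sqrt 2 := by
    rw [q]; exact Real.sqrt_le_sqrt (by nlinarith [norm_nonneg b])
  have h2 : q a * q b ≤ 2 := by
    have := Real.sq_sqrt (show (0:ℝ) ≤ 2 by norm_num)
    nlinarith [q_pos a, q_pos b, Real.sqrt_nonneg 2]
  have hs := sphDist_nonneg (↑a) (↑b)
  nlinarith [mul_pos (q_pos a) (q_pos b)]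

/-- Bounded transfer: spherically close to a bounded point means euclidean-close. -/
lemma bounded_transfer {a b : ℂ} {M : ℝ} (hM : 0 ≤ M) (hb : ‖b‖ ≤ M)
    (hs : sphDist ↑a ↑b ≤ 1 / (1 + M)) :
    ‖a‖ ≤ 2*M + 1 ∧ dist a b ≤ sphDist ↑a ↑b * ((2*M + 2) * (1 + M)) / 2 := by
  have hd : dist a b ≤ sphDist ↑a ↑b * ((1 + ‖a‖) * (1 + ‖b‖)) / 2 := by
    rw [dist_eq_sph a b]
    have hq := sphDist_nonneg (↑a) (↑b)
    have := q_le a; have := q_le b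
    have h1 : q a * q b ≤ (1 + ‖a‖) * (1 + ‖b‖) := by
      nlinarith [q_pos a, q_pos b, norm_nonneg a, norm_nonneg b]
    nlinarith
  have hna : ‖a‖ ≤ 2*M + 1 := by
    have h1 : dist a b ≤ (1/(1+M)) * ((1 + ‖a‖) * (1 + M)) / 2 := by
      calc dist a b ≤ sphDist ↑a ↑b * ((1 + ‖a‖) * (1 + ‖b‖)) / 2 := hd
      _ ≤ (1/(1+M)) * ((1 + ‖a‖) * (1 + M)) / 2 := by
          have hq := sphDist_nonneg (↑a) (↑b)
          have hn := norm_nonneg a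
          nlinarith [mul_le_mul hs (by nlinarith : (1 + ‖a‖) * (1 + ‖b‖) ≤ (1 + ‖a‖) * (1 + M))
            (by nlinarith [norm_nonneg b] : (0:ℝ) ≤ (1 + ‖a‖) * (1 + ‖b‖)) (by positivity)]
    have h2 : (1/(1+M)) * ((1 + ‖a‖) * (1 + M)) / 2 = (1 + ‖a‖) / 2 := by
      field_simp
    rw [h2] at h1
    have h3 : ‖a‖ ≤ ‖b‖ + dist a b := by
      have := norm_sub_norm_le a b
      rw [dist_eq_norm]
      linarith
    linarith
  refine ⟨hna, ?_⟩
  calc dist a b ≤ sphDist ↑a ↑b * ((1 + ‖a‖) * (1 + ‖b‖)) / 2 := hd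
  _ ≤ sphDist ↑a ↑b * ((2*M + 2) * (1 + M)) / 2 := by
      have hq := sphDist_nonneg (↑a) (↑b)
      have := norm_nonneg a; have := norm_nonneg b
      nlinarith [mul_le_mul (by linarith : 1 + ‖a‖ ≤ 2*M + 2) (by linarith : 1 + ‖b‖ ≤ 1 + M)
        (by linarith : (0:ℝ) ≤ 1 + ‖b‖) (by linarith : (0:ℝ) ≤ 2*M + 2)]

/-! ### Convergence notions -/

/-- Spherical uniform convergence on closed balls (centered at 0). -/
def ConvOn (H : ℕ → ℂ → OnePoint ℂ) (g : ℂ → OnePoint ℂ) : Prop :=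
  ∀ R : ℝ, ∀ ε > (0:ℝ), ∃ N, ∀ n ≥ N, ∀ z : ℂ, ‖z‖ ≤ R → sphDist (H n z) (g z) < ε

/-- Eventual analyticity on closed balls. -/
def EvAnal (H : ℕ → ℂ → ℂ) : Prop :=
  ∀ R : ℝ, ∃ N, ∀ n ≥ N, ∀ z : ℂ, ‖z‖ ≤ R → AnalyticAt ℂ (H n) z

/-- The limit of spherically-uniformly convergent analytic functions is (metrically)
continuous. -/
lemma metCont_of_conv {H : ℕ → ℂ → ℂ} {g : ℂ → OnePoint ℂ}
    (hA : EvAnal H) (hC : ConvOn (fun n z => ↑(H n z)) g) (z₀ : ℂ) :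
    ∀ ε > (0:ℝ), ∃ δ > (0:ℝ), ∀ z, dist z z₀ < δ → sphDist (g z) (g z₀) < ε := by
  intro ε hε
  obtain ⟨N₁, hN₁⟩ := hA (‖z₀‖ + 1)
  obtain ⟨N₂, hN₂⟩ := hC (‖z₀‖ + 1) (ε/3) (by linarith)
  set n := max N₁ N₂
  have han : AnalyticAt ℂ (H n) z₀ :=
    hN₁ n (le_max_left _ _) z₀ (by linarith [norm_nonneg z₀])
  have hcont : ContinuousAt (H n) z₀ := han.continuousAt
  rw [Metric.continuousAt_iff] at hcont
  obtain ⟨δ₁, hδ₁, hδ⟩ := hcont (ε/12) (by linarith)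
  refine ⟨min δ₁ 1, by positivity, fun z hz => ?_⟩
  have hz1 : dist z z₀ < δ₁ := lt_of_lt_of_le hz (min_le_left _ _)
  have hz2 : ‖z‖ ≤ ‖z₀‖ + 1 := by
    have h := dist_triangle z z₀ 0
    simp only [dist_zero_right] at h
    have : dist z z₀ ≤ 1 := le_of_lt (lt_of_lt_of_le hz (min_le_right _ _))
    calc ‖z‖ ≤ dist z z₀ + ‖z₀‖ := by
          rw [dist_eq_norm]
          have := norm_sub_le (z - z₀) (-z₀)
          calc ‖z‖ = ‖(z - z₀) + z₀‖ := by ring_nf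
          _ ≤ ‖z - z₀‖ + ‖z₀‖ := norm_add_le _ _
    _ ≤ ‖z₀‖ + 1 := by linarith
  have t1 : sphDist (g z) ↑(H n z) < ε/3 := by
    rw [sphDist_comm]
    exact hN₂ n (le_max_right _ _) z hz2
  have t2 : sphDist (↑(H n z) : OnePoint ℂ) ↑(H n z₀) < ε/3 := by
    calc sphDist (↑(H n z) : OnePoint ℂ) ↑(H n z₀) ≤ 2 * dist (H n z) (H n z₀) :=
          sphDist_le_two_dist _ _
    _ < ε/3 := by have := hδ hz1; linarith
  have t3 : sphDist (↑(H n z₀) : OnePoint ℂ) (g z₀) < ε/3 :=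
    hN₂ n (le_max_right _ _) z₀ (by linarith [norm_nonneg z₀])
  calc sphDist (g z) (g z₀) ≤ sphDist (g z) ↑(H n z) + sphDist (↑(H n z)) (g z₀) :=
        sphDist_triangle _ _ _
  _ ≤ sphDist (g z) ↑(H n z) + (sphDist (↑(H n z) : OnePoint ℂ) ↑(H n z₀)
        + sphDist (↑(H n z₀) : OnePoint ℂ) (g z₀)) := by
        have := sphDist_triangle (↑(H n z) : OnePoint ℂ) ↑(H n z₀) (g z₀)
        linarith
  _ < ε := by linarith

/-- Continuity of the spherical distance to a fixed point along the limit function. -/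
lemma cont_sphDist_of_conv {H : ℕ → ℂ → ℂ} {g : ℂ → OnePoint ℂ}
    (hA : EvAnal H) (hC : ConvOn (fun n z => ↑(H n z)) g) (y : OnePoint ℂ) :
    Continuous (fun z => sphDist (g z) y) := by
  rw [Metric.continuous_iff]
  intro z₀ ε hε
  obtain ⟨δ, hδ, hd⟩ := metCont_of_conv hA hC z₀ ε hε
  refine ⟨δ, hδ, fun z hz => ?_⟩
  have h1 := hd z hz
  rw [Real.dist_eq, abs_sub_lt_iff]
  constructor
  · have := sphDist_triangle (g z) (g z₀) y
    have := sphDist_comm (g z) (g z₀)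
    linarith
  · have := sphDist_triangle (g z₀) (g z) y
    have := sphDist_comm (g z₀) (g z)
    linarith

/-! ### Numeric helpers -/

lemma sqrt10_pos : (0:ℝ) < Real.sqrt 10 := Real.sqrt_pos.mpr (by norm_num)

lemma num1 : 1/Real.sqrt 10 < 2/Real.sqrt (1 + 3^2) := by
  rw [show (1:ℝ) + 3^2 = 10 by norm_num]
  rw [div_lt_div_iff₀ sqrt10_pos sqrt10_pos]
  nlinarith [sqrt10_pos]

lemma num2 : 1 + 1/Real.sqrt 10 < 2/Real.sqrt (1 + 1^2) := by
  rw [show (1:ℝ) + 1^2 = 2 by norm_num]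
  have h1 : (3:ℝ) < Real.sqrt 10 := by
    nlinarith [Real.sq_sqrt (show (0:ℝ) ≤ 10 by norm_num), Real.sqrt_nonneg 10]
  have h2 : 1/Real.sqrt 10 < 1/3 := by
    rw [div_lt_div_iff₀ sqrt10_pos (by norm_num : (0:ℝ) < 3)]
    linarith
  have h3 : (2:ℝ)/Real.sqrt 2 = Real.sqrt 2 := Real.div_sqrt
  have h4 : (4:ℝ)/3 < Real.sqrt 2 := by
    nlinarith [Real.sq_sqrt (show (0:ℝ) ≤ 2 by norm_num), Real.sqrt_nonneg 2]
  rw [h3]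
  linarith

/-! ### Infinity propagation (Hurwitz-type rigidity) -/

/-- If a spherical uniform limit of eventually-analytic functions takes the value `∞`
somewhere, then it is identically `∞`. -/
lemma infty_prop {H : ℕ → ℂ → ℂ} {g : ℂ → OnePoint ℂ}
    (hA : EvAnal H) (hC : ConvOn (fun n z => ↑(H n z)) g)
    {z₀ : ℂ} (h0 : g z₀ = ∞) : ∀ z, g z = ∞ := by
  set S : Set ℂ := {z | g z = ∞} with hS
  have hclosed : IsClosed S := by
    have hSeq : S = (fun z => sphDist (g z) ∞) ⁻¹' {0} := by
      ext z
      simp only [hS, Set.mem_setOf_eq, Set.mem_preimage, Set.mem_singleton_iff]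
      constructor
      · intro h; rw [h]; exact sphDist_infty_infty
      · intro h; exact eq_of_sphDist_eq_zero h.le
    rw [hSeq]
    exact IsClosed.preimage (cont_sphDist_of_conv hA hC ∞) isClosed_singleton
  have hopen : IsOpen S := by
    rw [Metric.isOpen_iff]
    intro c hc
    have hgc : g c = ∞ := hc
    obtain ⟨δc, hδc, hcont⟩ := metCont_of_conv hA hC c (1/Real.sqrt 10) (by positivity)
    set r := δc / 3 with hrdef
    have hrpos : 0 < r := by positivity
    refine ⟨r, hrpos, fun z₁ hz₁ => ?_⟩
    rw [mem_ball] at hz₁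
    by_contra hne
    have hne : g z₁ ≠ ∞ := hne
    -- all g-values on the disc of radius 2r are spherically close to ∞
    have hg2r : ∀ z, dist z c ≤ 2*r → sphDist (g z) ∞ < 1/Real.sqrt 10 := by
      intro z hz
      have h1 : sphDist (g z) (g c) < 1/Real.sqrt 10 := hcont z (by
        rw [hrdef] at hz; linarith)
      calc sphDist (g z) ∞ ≤ sphDist (g z) (g c) + sphDist (g c) ∞ := sphDist_triangle _ _ _
      _ = sphDist (g z) (g c) := by rw [hgc, sphDist_infty_infty, add_zero]
      _ < 1/Real.sqrt 10 := h1
    have hbig : ∀ z, dist z c ≤ 2*r → g z ≠ ∞ → 3 < ‖finPart (g z)‖ := by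
      intro z hz hzne
      apply norm_gt_of_sphDist_infty_lt (by norm_num : (0:ℝ) ≤ 3)
      rw [coe_finPart hzne]
      exact lt_trans (hg2r z hz) num1
    have hz₁2r : dist z₁ c ≤ 2*r := by linarith
    set c1 := finPart (g z₁) with hc1def
    have hc3 : 3 < ‖c1‖ := hbig z₁ hz₁2r hne
    have hc0 : c1 ≠ 0 := by
      intro h; rw [h] at hc3; simp at hc3; linarith
    set k : ℂ → ℂ := fun z => finPart (oinv (g z)) with hkdef
    have hkc : k c = 0 := by
      rw [hkdef]; simp only; rw [hgc, oinv_infty, finPart_coe]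
    have hkz₁ : k z₁ = c1⁻¹ := by
      rw [hkdef]; simp only
      rw [← coe_finPart hne, ← hc1def, oinv_coe_ne c1 hc0, finPart_coe]
    set R := ‖c‖ + 2*r with hRdef
    have hzR : ∀ z ∈ closedBall c (2*r), ‖z‖ ≤ R := by
      intro z hz
      rw [mem_closedBall] at hz
      calc ‖z‖ = ‖(z - c) + c‖ := by ring_nf
      _ ≤ ‖z - c‖ + ‖c‖ := norm_add_le _ _
      _ ≤ R := by rw [hRdef, ← dist_eq_norm]; linarith
    obtain ⟨N₁, hN₁⟩ := hA R
    obtain ⟨N₂, hN₂⟩ := hC R 1 one_pos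
    -- on the disc, the approximants are eventually large
    have hHbig : ∀ n ≥ N₂, ∀ z ∈ closedBall c (2*r), 1 < ‖H n z‖ := by
      intro n hn z hz
      apply norm_gt_of_sphDist_infty_lt (by norm_num : (0:ℝ) ≤ 1)
      have h1 : sphDist (↑(H n z) : OnePoint ℂ) (g z) < 1 := hN₂ n hn z (hzR z hz)
      have h2 : sphDist (g z) ∞ < 1/Real.sqrt 10 := hg2r z (mem_closedBall.mp hz)
      calc sphDist (↑(H n z) : OnePoint ℂ) ∞
          ≤ sphDist (↑(H n z) : OnePoint ℂ) (g z) + sphDist (g z) ∞ := sphDist_triangle _ _ _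
      _ < 1 + 1/Real.sqrt 10 := by linarith
      _ < 2/Real.sqrt (1 + 1^2) := num2
    have hHne : ∀ n ≥ N₂, ∀ z ∈ closedBall c (2*r), H n z ≠ 0 := by
      intro n hn z hz
      have := hHbig n hn z hz
      intro h; rw [h] at this; simp at this; linarith
    -- identification of oinv ∘ g with k on the disc
    have hkcoe : ∀ z ∈ closedBall c (2*r), (↑(k z) : OnePoint ℂ) = oinv (g z) ∧ ‖k z‖ ≤ 1 := by
      intro z hz
      by_cases hzinf : g z = ∞
      · constructor
        · rw [hkdef]; simp only; rw [hzinf, oinv_infty, finPart_coe]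
        · rw [hkdef]; simp only; rw [hzinf, oinv_infty, finPart_coe]; simp
      · have h3 := hbig z (mem_closedBall.mp hz) hzinf
        have hfz0 : finPart (g z) ≠ 0 := by
          intro h; rw [h] at h3; simp at h3; linarith
        have hgz : g z = ↑(finPart (g z)) := (coe_finPart hzinf).symm
        constructor
        · rw [hkdef]; simp only
          conv_rhs => rw [hgz]
          rw [oinv_coe_ne _ hfz0, finPart_oinv]
        · rw [hkdef]; simp only
          conv_lhs => rw [hgz]
          rw [oinv_coe_ne _ hfz0, finPart_coe, norm_inv]
          rw [inv_le_one_iff₀]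
          right; linarith
    -- uniform convergence of the reciprocals on the disc
    have hKconv : TendstoUniformlyOn (fun n z => (H n z)⁻¹) k atTop (closedBall c (2*r)) := by
      rw [Metric.tendstoUniformlyOn_iff]
      intro ε hε
      obtain ⟨N₃, hN₃⟩ := hC R ε hε
      rw [eventually_atTop]
      refine ⟨max N₂ N₃, fun n hn z hz => ?_⟩
      have hn2 : n ≥ N₂ := le_trans (le_max_left _ _) hn
      have hn3 : n ≥ N₃ := le_trans (le_max_right _ _) hn
      have hHz := hHne n hn2 z hz
      have hKle : ‖(H n z)⁻¹‖ ≤ 1 := by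
        rw [norm_inv, inv_le_one_iff₀]
        right; exact le_of_lt (hHbig n hn2 z hz)
      obtain ⟨hkeq, hkle⟩ := hkcoe z hz
      have hsph : sphDist (↑((H n z)⁻¹) : OnePoint ℂ) ↑(k z) = sphDist (↑(H n z) : OnePoint ℂ) (g z) := by
        rw [hkeq, ← oinv_coe_ne _ hHz, sphDist_oinv]
      calc dist (k z) ((H n z)⁻¹) = dist ((H n z)⁻¹) (k z) := dist_comm _ _
      _ ≤ sphDist (↑((H n z)⁻¹) : OnePoint ℂ) ↑(k z) := dist_le_sph_of_norm_le_one hKle hkle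
      _ = sphDist (↑(H n z) : OnePoint ℂ) (g z) := hsph
      _ < ε := hN₃ n hn3 z (hzR z hz)
    have hKdiff : ∀ᶠ n in atTop, DifferentiableOn ℂ (fun z => (H n z)⁻¹) (ball c (2*r)) := by
      rw [eventually_atTop]
      refine ⟨max N₁ N₂, fun n hn z hz => ?_⟩
      have hzc : z ∈ closedBall c (2*r) := ball_subset_closedBall hz
      have h1 : AnalyticAt ℂ (H n) z := hN₁ n (le_trans (le_max_left _ _) hn) z (hzR z hzc)
      exact ((h1.inv (hHne n (le_trans (le_max_right _ _) hn) z hzc)).differentiableAt).differentiableWithinAt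
    have hkdiff : DifferentiableOn ℂ k (ball c (2*r)) :=
      ((hKconv.mono ball_subset_closedBall).tendstoLocallyUniformlyOn).differentiableOn
        hKdiff isOpen_ball
    have hkanal : AnalyticOnNhd ℂ k (ball c (2*r)) := hkdiff.analyticOnNhd isOpen_ball
    have hcmem : c ∈ ball c (2*r) := mem_ball_self (by linarith)
    rcases (hkanal c hcmem).eventually_eq_zero_or_eventually_ne_zero with hzero | hnever
    · -- k vanishes identically, contradicting k z₁ ≠ 0
      have heq : Set.EqOn k 0 (ball c (2*r)) :=
        hkanal.eqOn_zero_of_preconnected_of_eventuallyEq_zero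
          (convex_ball c (2*r)).isPreconnected hcmem hzero
      have : k z₁ = 0 := heq (by rw [mem_ball]; linarith)
      rw [hkz₁, inv_eq_zero] at this
      exact hc0 this
    · -- k has an isolated zero at c : minimum modulus on a small circle + max principle
      rw [eventually_nhdsWithin_iff, Metric.eventually_nhds_iff] at hnever
      obtain ⟨δ', hδ', hδ'ne⟩ := hnever
      set ρ := min (δ'/2) r with hρdef
      have hρpos : 0 < ρ := by apply lt_min <;> linarith
      have hsph_sub : sphere c ρ ⊆ ball c (2*r) := by
        intro z hz
        rw [mem_sphere] at hz
        rw [mem_ball, hz]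
        have : ρ ≤ r := min_le_right _ _
        linarith
      have hsph_ne : ∀ z ∈ sphere c ρ, k z ≠ 0 := by
        intro z hz
        rw [mem_sphere] at hz
        apply hδ'ne
        · rw [hz]
          have : ρ ≤ δ'/2 := min_le_left _ _
          linarith
        · intro hzc
          rw [hzc] at hz
          simp at hz
          linarith [hz, hρpos]
      obtain ⟨zm, hzm, hmin⟩ := (isCompact_sphere c ρ).exists_isMinOn
        (NormedSpace.sphere_nonempty.mpr hρpos.le)
        ((hkdiff.continuousOn.mono hsph_sub).norm)
      set δm := ‖k zm‖ with hδmdef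
      have hδmpos : 0 < δm := norm_pos_iff.mpr (hsph_ne zm hzm)
      -- choose a large index n
      obtain ⟨N₄, hN₄⟩ := eventually_atTop.mp
        (Metric.tendstoUniformlyOn_iff.mp hKconv (δm/2) (by positivity))
      obtain ⟨N₅, hN₅⟩ := hC R (2/Real.sqrt (1 + (4/δm)^2)) (by positivity)
      set n := max (max N₁ N₂) (max N₄ N₅) with hndef
      have hn1 : N₁ ≤ n := le_trans (le_max_left _ _) (le_max_left _ _)
      have hn2 : N₂ ≤ n := le_trans (le_max_right _ _) (le_max_left _ _)
      have hn4 : N₄ ≤ n := le_trans (le_max_left _ _) (le_max_right _ _)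
      have hn5 : N₅ ≤ n := le_trans (le_max_right _ _) (le_max_right _ _)
      -- H n is large at the centre
      have hbigc : 4/δm < ‖H n c‖ := by
        apply norm_gt_of_sphDist_infty_lt (by positivity : (0:ℝ) ≤ 4/δm)
        have := hN₅ n hn5 c (hzR c (mem_closedBall_self (by linarith)))
        rwa [hgc] at this
      -- H n is bounded by 2/δm on the circle
      have hbdsph : ∀ z ∈ sphere c ρ, ‖H n z‖ ≤ 2/δm := by
        intro z hz
        have hzc : z ∈ closedBall c (2*r) := ball_subset_closedBall (hsph_sub hz)
        have hKz : dist (k z) ((H n z)⁻¹) < δm/2 := hN₄ n hn4 z hzc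
        have hkz_ge : δm ≤ ‖k z‖ := hmin hz
        have hKinv_ge : δm/2 ≤ ‖(H n z)⁻¹‖ := by
          have h1 : ‖k z‖ - ‖(H n z)⁻¹‖ ≤ dist (k z) ((H n z)⁻¹) := by
            rw [dist_eq_norm]; exact norm_sub_norm_le _ _
          linarith
        have h2 : ‖(H n z)⁻¹‖⁻¹ ≤ (δm/2)⁻¹ := inv_anti₀ (by positivity) hKinv_ge
        rw [norm_inv, inv_inv, inv_div] at h2
        exact h2
      have hdiffcl : DiffContOnCl ℂ (H n) (ball c ρ) := by
        apply DifferentiableOn.diffContOnCl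
        rw [closure_ball c hρpos.ne']
        intro z hz
        have hzc : z ∈ closedBall c (2*r) := by
          apply closedBall_subset_closedBall ?_ hz
          have := min_le_right (δ'/2) r
          rw [hρdef] at *
          linarith
        exact ((hN₁ n hn1 z (hzR z hzc)).differentiableAt).differentiableWithinAt
      have hfr : ∀ z ∈ frontier (ball c ρ), ‖H n z‖ ≤ 2/δm := by
        rw [frontier_ball c hρpos.ne']
        exact hbdsph
      have hmax := Complex.norm_le_of_forall_mem_frontier_norm_le isBounded_ball hdiffcl hfr
        (subset_closure (mem_ball_self hρpos))
      have hcmp : (2:ℝ)/δm < 4/δm := by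
        rw [div_lt_div_iff₀ hδmpos hδmpos]
        nlinarith [hδmpos]
      linarith [hbigc, hmax]
  have huniv : S = Set.univ := IsClopen.eq_univ ⟨hclosed, hopen⟩ ⟨z₀, h0⟩
  intro z
  have : z ∈ S := by rw [huniv]; exact Set.mem_univ z
  exact this

/-! ### Finite limits are entire -/

lemma entire_of_conv_finite {H : ℕ → ℂ → ℂ} {g : ℂ → OnePoint ℂ}
    (hA : EvAnal H) (hC : ConvOn (fun n z => ↑(H n z)) g)
    (hfin : ∀ z, g z ≠ ∞) : Differentiable ℂ (fun z => finPart (g z)) := by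
  intro z₀
  set G : ℂ → ℂ := fun z => finPart (g z) with hGdef
  have hcont : ContinuousOn (fun z => sphDist (g z) ∞) (closedBall z₀ 1) :=
    (cont_sphDist_of_conv hA hC ∞).continuousOn
  obtain ⟨zm, hzm, hmin⟩ := (isCompact_closedBall z₀ 1).exists_isMinOn
    ⟨z₀, mem_closedBall_self one_pos.le⟩ hcont
  set m := sphDist (g zm) ∞ with hmdef
  have hmpos : 0 < m := by
    rw [hmdef, ← coe_finPart (hfin zm), sphDist_coe_infty]
    exact div_pos two_pos (q_pos _)
  set M := 2/m with hMdef
  have hMpos : 0 < M := by positivity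
  have hGbd : ∀ z ∈ closedBall z₀ 1, ‖G z‖ ≤ M := by
    intro z hz
    have h1 : m ≤ sphDist (g z) ∞ := hmin hz
    have h2 : sphDist (g z) ∞ = 2/q (G z) := by
      rw [hGdef]; simp only
      rw [← coe_finPart (hfin z), sphDist_coe_infty, finPart_coe]
    rw [h2] at h1
    have h3 : q (G z) ≤ 2/m := by
      rw [le_div_iff₀ (q_pos _)] at h1
      rw [le_div_iff₀ hmpos]
      nlinarith
    exact le_trans (norm_le_q _) h3
  set R := ‖z₀‖ + 1 with hRdef
  have hzR : ∀ z ∈ closedBall z₀ 1, ‖z‖ ≤ R := by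
    intro z hz
    rw [mem_closedBall] at hz
    calc ‖z‖ = ‖(z - z₀) + z₀‖ := by ring_nf
    _ ≤ ‖z - z₀‖ + ‖z₀‖ := norm_add_le _ _
    _ ≤ R := by rw [hRdef, ← dist_eq_norm]; linarith
  obtain ⟨N₁, hN₁⟩ := hA R
  have hconv : TendstoUniformlyOn H G atTop (closedBall z₀ 1) := by
    rw [Metric.tendstoUniformlyOn_iff]
    intro ε hε
    have hpos : (0:ℝ) < (2*M+2)*(1+M) := by positivity
    set ε' := min (1/(1+M)) (2*ε/((2*M+2)*(1+M))) with hε'def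
    have hε'pos : 0 < ε' := by
      apply lt_min
      · positivity
      · positivity
    obtain ⟨N₂, hN₂⟩ := hC R ε' hε'pos
    rw [eventually_atTop]
    refine ⟨N₂, fun n hn z hz => ?_⟩
    have hs : sphDist (↑(H n z) : OnePoint ℂ) (g z) < ε' := hN₂ n hn z (hzR z hz)
    have hgz : g z = ↑(G z) := (coe_finPart (hfin z)).symm
    rw [hgz] at hs
    obtain ⟨hna, hd⟩ := bounded_transfer hMpos.le (hGbd z hz)
      (le_trans hs.le (min_le_left _ _))
    rw [dist_comm]
    calc dist (H n z) (G z) ≤ sphDist (↑(H n z) : OnePoint ℂ) ↑(G z) * ((2*M+2)*(1+M))/2 := hd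
    _ < ε := by
        have h4 : sphDist (↑(H n z) : OnePoint ℂ) ↑(G z) < 2*ε/((2*M+2)*(1+M)) :=
          lt_of_lt_of_le hs (min_le_right _ _)
        have hfa : 2*ε/((2*M+2)*(1+M))*((2*M+2)*(1+M)) = 2*ε := div_mul_cancel₀ _ hpos.ne'
        nlinarith [mul_lt_mul_of_pos_right h4 hpos,
          sphDist_nonneg (↑(H n z) : OnePoint ℂ) ↑(G z)]
  have hdiffev : ∀ᶠ n in atTop, DifferentiableOn ℂ (H n) (ball z₀ 1) := by
    rw [eventually_atTop]
    exact ⟨N₁, fun n hn z hz =>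
      ((hN₁ n hn z (hzR z (ball_subset_closedBall hz))).differentiableAt).differentiableWithinAt⟩
  have hdiff : DifferentiableOn ℂ G (ball z₀ 1) :=
    (hconv.mono ball_subset_closedBall).tendstoLocallyUniformlyOn.differentiableOn
      hdiffev isOpen_ball
  exact hdiff.differentiableAt (isOpen_ball.mem_nhds (mem_ball_self one_pos))

/-! ### Liouville -/

lemma exists_large_of_nonconstant {G : ℂ → ℂ} (hG : Differentiable ℂ G)
    (hnc : ∀ c : ℂ, G ≠ fun _ => c) : ∀ C : ℝ, ∃ t : ℂ, C < ‖G t‖ := by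
  by_contra hcon
  push_neg at hcon
  obtain ⟨C, hC⟩ := hcon
  have hbd : Bornology.IsBounded (Set.range G) := by
    rw [Metric.isBounded_iff_subset_closedBall 0]
    refine ⟨C, ?_⟩
    rintro x ⟨t, rfl⟩
    rw [mem_closedBall, dist_zero_right]
    exact hC t
  obtain ⟨c, hc⟩ := hG.exists_eq_const_of_bounded hbd
  exact hnc c hc

/-! ### Transfer along the inversion -/

lemma anal_of_ne_infty {f : ℂ → OnePoint ℂ} (hm : MeroSphere f) {z : ℂ} (h : f z ≠ ∞) :
    AnalyticAt ℂ (fun w => finPart (f w)) z := by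
  rcases hm z with ⟨_, hana⟩ | ⟨heq, _⟩
  · exact hana
  · exact absurd heq h

lemma mero_oinv {f : ℂ → OnePoint ℂ} (hf : MeroSphere f) : MeroSphere (fun z => oinv (f z)) := by
  intro z
  rcases hf z with ⟨hne, hana⟩ | ⟨heq, hana⟩
  · by_cases h0 : f z = ((0:ℂ) : OnePoint ℂ)
    · right
      constructor
      · simp only; rw [h0]; exact oinv_coe_zero
      · have he : (fun w => finPart (oinv (oinv (f w)))) = fun w => finPart (f w) := by
          funext w; rw [oinv_oinv]
        show AnalyticAt ℂ (fun w => finPart (oinv (oinv (f w)))) z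
        rw [he]
        exact hana
    · left
      constructor
      · simp only [Ne, oinv_eq_infty_iff]; exact h0
      · have he : (fun w => finPart (oinv (f w))) = fun w => (finPart (f w))⁻¹ := by
          funext w; rw [finPart_oinv]
        show AnalyticAt ℂ (fun w => finPart (oinv (f w))) z
        rw [he]
        apply hana.inv
        intro hout
        apply h0
        rw [← coe_finPart hne, hout]
  · left
    constructor
    · simp only; rw [heq, oinv_infty]; exact OnePoint.coe_ne_infty _
    · exact hana

lemma unif_oinv {f g : ℂ → OnePoint ℂ} {h : ℕ → ℂ} (hu : UnifCompLim f h g) :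
    UnifCompLim (fun z => oinv (f z)) h (fun z => oinv (g z)) := by
  intro K hK ε hε
  obtain ⟨N, hN⟩ := hu K hK ε hε
  refine ⟨N, fun n hn z hz => ?_⟩
  simpa only [sphDist_oinv] using hN n hn z hz

lemma yosida_oinv {f : ℂ → OnePoint ℂ} (hf : YosidaN1 f) : YosidaN1 (fun z => oinv (f z)) := by
  obtain ⟨hm, hnorm, hnc⟩ := hf
  refine ⟨mero_oinv hm, ?_, ?_⟩
  · intro h
    obtain ⟨φ, hφ, g, hg⟩ := hnorm h
    exact ⟨φ, hφ, fun z => oinv (g z), unif_oinv hg⟩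
  · rintro h g hg ⟨c, hc⟩
    have h3 : UnifCompLim f h (fun z => oinv (g z)) := by
      intro K hK ε hε
      obtain ⟨N, hN⟩ := hg K hK ε hε
      refine ⟨N, fun n hn z hz => ?_⟩
      have h4 := hN n hn z hz
      rw [← sphDist_oinv (f (z + h n)) (oinv (g z)), oinv_oinv]
      exact h4
    refine hnc h (fun z => oinv (g z)) h3 ⟨oinv c, ?_⟩
    rw [hc]

/-! ### Bridges from `UnifCompLim` to `ConvOn` for translates -/

lemma evanal_translates {f : ℂ → OnePoint ℂ} (hm : MeroSphere f) {w : ℕ → ℂ} {φ : ℕ → ℕ}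
    (hφ : StrictMono φ) (hpf : ∀ n : ℕ, ∀ z ∈ ball (w n) (n:ℝ), f z ≠ ∞) :
    EvAnal (fun n z => finPart (f (z + w (φ n)))) := by
  intro R
  refine ⟨⌈R⌉₊ + 1, fun n hn z hz => ?_⟩
  have h1 : R < (φ n : ℝ) := by
    have := Nat.le_ceil R
    have h2 : (⌈R⌉₊ + 1 : ℕ) ≤ φ n := le_trans hn hφ.le_apply
    have h3 : ((⌈R⌉₊ + 1 : ℕ) : ℝ) ≤ (φ n : ℝ) := by exact_mod_cast h2
    push_cast at h3
    linarith
  have hmem : z + w (φ n) ∈ ball (w (φ n)) ((φ n : ℕ) : ℝ) := by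
    rw [mem_ball]
    simp only [dist_eq_norm, add_sub_cancel_right]
    linarith
  have hne := hpf (φ n) _ hmem
  have ha := anal_of_ne_infty hm hne
  have htr : AnalyticAt ℂ (fun y : ℂ => y + w (φ n)) z := by
    exact (analyticAt_id).add analyticAt_const
  have hcomp : AnalyticAt ℂ ((fun y => finPart (f y)) ∘ (fun y : ℂ => y + w (φ n))) z :=
    AnalyticAt.comp ha htr
  exact hcomp

lemma convOn_translates {f g : ℂ → OnePoint ℂ} {w : ℕ → ℂ} {φ : ℕ → ℕ}
    (hφ : StrictMono φ) (hpf : ∀ n : ℕ, ∀ z ∈ ball (w n) (n:ℝ), f z ≠ ∞)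
    (hu : UnifCompLim f (w ∘ φ) g) :
    ConvOn (fun n z => ↑(finPart (f (z + w (φ n))))) g := by
  intro R ε hε
  obtain ⟨N₀, hN₀⟩ := hu (closedBall 0 R) (isCompact_closedBall 0 R) ε hε
  refine ⟨max N₀ (⌈R⌉₊ + 1), fun n hn z hz => ?_⟩
  have h1 : R < (φ n : ℝ) := by
    have := Nat.le_ceil R
    have h2 : (⌈R⌉₊ + 1 : ℕ) ≤ φ n := le_trans (le_trans (le_max_right _ _) hn) hφ.le_apply
    have h3 : ((⌈R⌉₊ + 1 : ℕ) : ℝ) ≤ (φ n : ℝ) := by exact_mod_cast h2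
    push_cast at h3
    linarith
  have hmem : z + w (φ n) ∈ ball (w (φ n)) ((φ n : ℕ) : ℝ) := by
    rw [mem_ball]
    simp only [dist_eq_norm, add_sub_cancel_right]
    linarith
  have hne := hpf (φ n) _ hmem
  have h2 : (↑(finPart (f (z + w (φ n)))) : OnePoint ℂ) = f (z + w (φ n)) := coe_finPart hne
  show sphDist (↑(finPart (f (z + w (φ n)))) : OnePoint ℂ) (g z) < ε
  rw [h2]
  exact hN₀ n (le_trans (le_max_left _ _) hn) z
    (by rw [mem_closedBall, dist_zero_right]; exact hz)

/-! ### The core theorem: no arbitrarily large pole-free balls -/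

lemma no_polefree_balls {f : ℂ → OnePoint ℂ} (hf : YosidaN1 f) :
    ¬ (∀ n : ℕ, ∃ w : ℂ, ∀ z ∈ ball w (n:ℝ), f z ≠ ∞) := by
  intro hpf'
  choose w hw using hpf'
  obtain ⟨hm, hnorm, hnc⟩ := hf
  obtain ⟨φ, hφ, g, hg⟩ := hnorm w
  have hA := evanal_translates hm hφ hw
  have hC := convOn_translates hφ hw hg
  by_cases hex : ∃ z₀, g z₀ = ∞
  · obtain ⟨z₀, h0⟩ := hex
    exact hnc (w ∘ φ) g hg ⟨∞, funext (infty_prop hA hC h0)⟩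
  · push_neg at hex
    have hGdiff := entire_of_conv_finite hA hC hex
    set G := fun z => finPart (g z) with hGdef
    have hgG : ∀ z, g z = ↑(G z) := fun z => (coe_finPart (hex z)).symm
    have hGnc : ∀ c : ℂ, G ≠ fun _ => c := by
      intro c hcst
      exact hnc (w ∘ φ) g hg ⟨↑c, funext fun z => by rw [hgG z, congrFun hcst z]⟩
    obtain ⟨t, ht⟩ : ∃ t : ℕ → ℂ, ∀ k : ℕ, (k:ℝ) < ‖G (t k)‖ := by
      have := exists_large_of_nonconstant hGdiff hGnc
      exact ⟨fun k => (this k).choose, fun k => (this k).choose_spec⟩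
    have hstep : ∀ k : ℕ, ∃ s : ℂ, ∀ z : ℂ, ‖z‖ ≤ (k:ℝ) →
        sphDist (f (z + s)) ↑(G (z + t k)) < 1/(k+1) := by
      intro k
      obtain ⟨N, hN⟩ := hg (closedBall (t k) (k:ℝ)) (isCompact_closedBall _ _)
        (1/(k+1)) (by positivity)
      refine ⟨t k + (w ∘ φ) N, fun z hz => ?_⟩
      have hmem : z + t k ∈ closedBall (t k) (k:ℝ) := by
        rw [mem_closedBall]
        simp only [dist_eq_norm, add_sub_cancel_right]
        exact hz
      have := hN N le_rfl (z + t k) hmem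
      rw [hgG (z + t k)] at this
      rw [show z + (t k + (w ∘ φ) N) = z + t k + (w ∘ φ) N by ring]
      exact this
    choose s hs using hstep
    obtain ⟨ψ, hψ, g₂, hg₂⟩ := hnorm s
    have hA' : EvAnal (fun k z => G (z + t (ψ k))) := by
      intro R
      refine ⟨0, fun n _ z _ => ?_⟩
      have hcomp : AnalyticAt ℂ (G ∘ (fun y : ℂ => y + t (ψ n))) z :=
        AnalyticAt.comp (hGdiff.analyticAt _) ((analyticAt_id).add analyticAt_const)
      exact hcomp
    have hC' : ConvOn (fun k z => ↑(G (z + t (ψ k)))) g₂ := by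
      intro R ε hε
      obtain ⟨N₀, hN₀⟩ := hg₂ (closedBall 0 R) (isCompact_closedBall 0 R) (ε/2) (half_pos hε)
      refine ⟨max N₀ (max ⌈R⌉₊ ⌈2/ε⌉₊), fun k hk z hz => ?_⟩
      have hk0 : N₀ ≤ k := le_trans (le_max_left _ _) hk
      have hkR : (R:ℝ) ≤ (ψ k : ℝ) := by
        have h1 : (⌈R⌉₊ : ℕ) ≤ k := le_trans (le_trans (le_max_left _ _) (le_max_right _ _)) hk
        have h2 : (⌈R⌉₊ : ℕ) ≤ ψ k := le_trans h1 hψ.le_apply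
        calc R ≤ (⌈R⌉₊ : ℝ) := Nat.le_ceil R
        _ ≤ (ψ k : ℝ) := by exact_mod_cast h2
      have hkε : 1/((ψ k : ℝ)+1) ≤ ε/2 := by
        have h1 : (⌈2/ε⌉₊ : ℕ) ≤ ψ k :=
          le_trans (le_trans (le_trans (le_max_right _ _) (le_max_right _ _)) hk) hψ.le_apply
        have h2 : 2/ε ≤ (ψ k : ℝ) := le_trans (Nat.le_ceil _) (by exact_mod_cast h1)
        rw [div_le_div_iff₀ (by positivity) (by norm_num)]
        have h3 : 2/ε * ε = 2 := div_mul_cancel₀ _ (ne_of_gt hε)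
        nlinarith [mul_le_mul_of_nonneg_right h2 hε.le]
      have h1 := hs (ψ k) z (le_trans hz hkR)
      have h2 := hN₀ k hk0 z (by rw [mem_closedBall, dist_zero_right]; exact hz)
      -- h2 : sphDist (f (z + (s ∘ ψ) k)) (g₂ z) < ε/2
      show sphDist (↑(G (z + t (ψ k))) : OnePoint ℂ) (g₂ z) < ε
      calc sphDist (↑(G (z + t (ψ k))) : OnePoint ℂ) (g₂ z)
          ≤ sphDist (↑(G (z + t (ψ k))) : OnePoint ℂ) (f (z + s (ψ k)))
            + sphDist (f (z + s (ψ k))) (g₂ z) := sphDist_triangle _ _ _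
      _ < ε/2 + ε/2 := by
          apply add_lt_add_of_le_of_lt
          · rw [sphDist_comm]
            exact le_trans h1.le hkε
          · exact h2
      _ = ε := by ring
    have hginf : g₂ 0 = ∞ := by
      by_contra hne2
      set m2 := sphDist (g₂ 0) ∞ with hm2def
      have hm2pos : 0 < m2 := by
        rw [hm2def, ← coe_finPart hne2, sphDist_coe_infty]
        exact div_pos two_pos (q_pos _)
      obtain ⟨N₀, hN₀⟩ := hC' 0 (m2/2) (by positivity)
      set k := max N₀ (⌈4/m2⌉₊ + 1) with hkdef
      have hk1 : (4/m2 : ℝ) < (k:ℝ) := by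
        have h1 : (⌈4/m2⌉₊ + 1 : ℕ) ≤ k := le_max_right _ _
        have h2 := Nat.le_ceil (4/m2)
        have h3 : ((⌈4/m2⌉₊ + 1 : ℕ) : ℝ) ≤ (k:ℝ) := by exact_mod_cast h1
        push_cast at h3
        linarith
      have hGk : (k:ℝ) ≤ ‖G (t (ψ k))‖ := by
        have h1 : (k:ℕ) ≤ ψ k := hψ.le_apply
        have h2 := ht (ψ k)
        calc (k:ℝ) ≤ (ψ k : ℝ) := by exact_mod_cast h1
        _ ≤ ‖G (t (ψ k))‖ := h2.le
      have hsph1 : sphDist (↑(G (t (ψ k))) : OnePoint ℂ) ∞ ≤ 2/(k:ℝ) := by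
        have hk0 : (0:ℝ) ≤ (k:ℝ) := Nat.cast_nonneg k
        calc sphDist (↑(G (t (ψ k))) : OnePoint ℂ) ∞ ≤ 2/Real.sqrt (1 + (k:ℝ)^2) :=
              sphDist_infty_le_of_norm_ge hk0 hGk
        _ ≤ 2/(k:ℝ) := by
            have hkpos : (0:ℝ) < (k:ℝ) := by
              have := div_pos (by norm_num : (0:ℝ) < 4) hm2pos
              linarith
            apply div_le_div_of_nonneg_left (by norm_num) hkpos
            calc (k:ℝ) = Real.sqrt ((k:ℝ)^2) := (Real.sqrt_sq hk0).symm
            _ ≤ Real.sqrt (1 + (k:ℝ)^2) := Real.sqrt_le_sqrt (by linarith)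
      have hsph2 : sphDist (↑(G (0 + t (ψ k))) : OnePoint ℂ) (g₂ 0) < m2/2 :=
        hN₀ k (le_max_left _ _) 0 (by simp)
      rw [zero_add] at hsph2
      have htri : m2 ≤ sphDist (g₂ 0) (↑(G (t (ψ k))) : OnePoint ℂ)
          + sphDist (↑(G (t (ψ k))) : OnePoint ℂ) ∞ := by
        rw [hm2def]
        exact sphDist_triangle _ _ _
      have hcm : sphDist (g₂ 0) (↑(G (t (ψ k))) : OnePoint ℂ)
          = sphDist (↑(G (t (ψ k))) : OnePoint ℂ) (g₂ 0) := sphDist_comm _ _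
      have h2k : 2/(k:ℝ) < m2/2 := by
        have hkpos : (0:ℝ) < (k:ℝ) := by
          have := div_pos (by norm_num : (0:ℝ) < 4) hm2pos
          linarith
        rw [div_lt_div_iff₀ hkpos (by norm_num : (0:ℝ) < 2)]
        rw [div_lt_iff₀ hm2pos] at hk1
        linarith
      linarith
    exact hnc (s ∘ ψ) g₂ hg₂ ⟨∞, funext (infty_prop hA' hC' hginf)⟩

end YosidaAux

open YosidaAux

/-- For any function f of Yosida's class N1 there is a radius R0 such that every disc of
radius R0 contains a zero of f and a pole of f. -/
theorem stmt11 (f : ℂ → OnePoint ℂ) (hf : YosidaN1 f) :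
    ∃ R₀ > (0 : ℝ), ∀ w : ℂ,
      (∃ z ∈ Metric.ball w R₀, f z = ((0 : ℂ) : OnePoint ℂ)) ∧
      (∃ z ∈ Metric.ball w R₀, f z = (∞ : OnePoint ℂ)) := by
  by_contra hcon
  rw [not_exists] at hcon
  have hEither : ∀ n : ℕ, ∃ wc : ℂ,
      (∀ z ∈ ball wc ((n:ℝ)+1), f z ≠ ((0:ℂ) : OnePoint ℂ)) ∨
      (∀ z ∈ ball wc ((n:ℝ)+1), f z ≠ (∞ : OnePoint ℂ)) := by
    intro n
    have h1 : ¬ ∀ w : ℂ, (∃ z ∈ Metric.ball w ((n:ℝ)+1), f z = ((0:ℂ) : OnePoint ℂ)) ∧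
        (∃ z ∈ Metric.ball w ((n:ℝ)+1), f z = (∞ : OnePoint ℂ)) := by
      intro hall
      exact hcon ((n:ℝ)+1) ⟨by positivity, hall⟩
    push_neg at h1
    obtain ⟨wc, hwc⟩ := h1
    refine ⟨wc, ?_⟩
    by_cases hz : ∃ z ∈ Metric.ball wc ((n:ℝ)+1), f z = ((0:ℂ) : OnePoint ℂ)
    · right
      exact hwc hz
    · left
      push_neg at hz
      exact hz
  have hdich : (∀ n : ℕ, ∃ wc : ℂ, ∀ z ∈ ball wc (n:ℝ), f z ≠ ((0:ℂ) : OnePoint ℂ)) ∨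
      (∀ n : ℕ, ∃ wc : ℂ, ∀ z ∈ ball wc (n:ℝ), f z ≠ (∞ : OnePoint ℂ)) := by
    by_cases hP : ∀ n : ℕ, ∃ wc : ℂ, ∀ z ∈ ball wc (n:ℝ), f z ≠ ((0:ℂ) : OnePoint ℂ)
    · exact Or.inl hP
    · right
      push_neg at hP
      obtain ⟨n₀, hn₀⟩ := hP
      intro n
      obtain ⟨wc, hwc⟩ := hEither (max n n₀)
      rcases hwc with h0 | hinf
      · exfalso
        obtain ⟨z, hz, hz0⟩ := hn₀ wc
        refine h0 z (ball_subset_ball ?_ hz) hz0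
        have : (n₀ : ℝ) ≤ ((max n n₀ : ℕ) : ℝ) := by exact_mod_cast le_max_right n n₀
        linarith
      · refine ⟨wc, fun z hz => hinf z (ball_subset_ball ?_ hz)⟩
        have : (n : ℝ) ≤ ((max n n₀ : ℕ) : ℝ) := by exact_mod_cast le_max_left n n₀
        linarith
  rcases hdich with h0free | hinffree
  · apply no_polefree_balls (yosida_oinv hf)
    intro n
    obtain ⟨wc, hwc⟩ := h0free n
    refine ⟨wc, fun z hz => ?_⟩
    show oinv (f z) ≠ ∞
    rw [Ne, oinv_eq_infty_iff]
    exact hwc z hz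
  · exact no_polefree_balls hf hinffree
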